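/- Let v₁,…,v_m ∈ ℝⁿ and let u₁,…,u_m be nonzero real numbers. Suppose the image of H(n,d) under the evaluation map E(f) = (f(v₁),…,f(v_m)) is exactly the hyperplane L = {x ∈ ℝ^m : u₁x₁ + … + u_mx_m = 0}. Then the image of the sums-of-squares cone Σ(n,2d) under evaluation at v₁,…,v_m equals the set of x ∈ ℝ^m with all x_i ≥ 0 satisfying |u₁|√x₁ + … + |u_m|√x_m ≥ 2|u_k|√x_k for all k = 1,…,m. -/

import Mathlib

open MvPolynomial

lemma triangle_vectors (a b c : ℝ) (ha : 0 ≤ a) (hb : 0 ≤ b) (hc : 0 ≤ c)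
    (h1 : a ≤ b + c) (h2 : b ≤ a + c) (h3 : c ≤ a + b) :
    ∃ p q r : ℝ × ℝ,
      p.1 ^ 2 + p.2 ^ 2 = a ^ 2 ∧ q.1 ^ 2 + q.2 ^ 2 = b ^ 2 ∧
      r.1 ^ 2 + r.2 ^ 2 = c ^ 2 ∧ p + q + r = 0 := by
  rcases eq_or_lt_of_le ha with h | hapos
  · have hbc : b = c := le_antisymm (by linarith) (by linarith)
    refine ⟨(0, 0), (b, 0), (-b, 0), by simp [← h], by simp, by simp [hbc], ?_⟩
    ext <;> simp
  · set x : ℝ := (c ^ 2 - b ^ 2 - a ^ 2) / (2 * a) with hx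
    have hax : 2 * a * x = c ^ 2 - b ^ 2 - a ^ 2 := by
      rw [hx]; field_simp
    have h4 : 0 ≤ (a + b) ^ 2 - c ^ 2 := by nlinarith
    have h5 : 0 ≤ c ^ 2 - (a - b) ^ 2 := by nlinarith
    have hxb : x ^ 2 ≤ b ^ 2 := by
      nlinarith [mul_nonneg h4 h5, hax, sq_nonneg a, mul_pos hapos hapos]
    set y : ℝ := Real.sqrt (b ^ 2 - x ^ 2) with hy
    have hy2 : y ^ 2 = b ^ 2 - x ^ 2 := Real.sq_sqrt (by linarith)
    refine ⟨(a, 0), (x, y), (-a - x, -y), by simp, by simp [hy2], ?_, ?_⟩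
    · simp only
      nlinarith [hy2, hax]
    · ext <;> simp

lemma pair_zero_of_sq (p : ℝ × ℝ) (h : p.1 ^ 2 + p.2 ^ 2 = 0) : p = 0 := by
  have h1 : p.1 = 0 := by nlinarith [sq_nonneg p.1, sq_nonneg p.2]
  have h2 : p.2 = 0 := by nlinarith [sq_nonneg p.1, sq_nonneg p.2]
  exact Prod.ext h1 h2

/-- Polygon lemma: nonneg reals each at most half the total sum are the norms of
planar vectors summing to zero. -/
lemma polygon_vectors {α : Type*} [DecidableEq α] :
    ∀ (N : ℕ) (s : Finset α), s.card ≤ N → ∀ (c : α → ℝ),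
      (∀ i ∈ s, 0 ≤ c i) → (∀ k ∈ s, 2 * c k ≤ ∑ i ∈ s, c i) →
      ∃ w : α → ℝ × ℝ,
        (∀ i ∈ s, (w i).1 ^ 2 + (w i).2 ^ 2 = c i ^ 2) ∧ ∑ i ∈ s, w i = 0 := by
  intro N
  induction N with
  | zero =>
    intro s hs c _ _
    have : s = ∅ := Finset.card_eq_zero.mp (Nat.le_zero.mp hs)
    exact ⟨0, by simp [this], by simp [this]⟩
  | succ N ih =>
    intro s hs c h0 h2
    by_cases hcard : s.card ≤ 3
    · -- small cases
      interval_cases h : s.card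
      · exact ⟨0, by simp [Finset.card_eq_zero.mp h], by simp [Finset.card_eq_zero.mp h]⟩
      · obtain ⟨i, rfl⟩ := Finset.card_eq_one.mp h
        have h1 := h2 i (by simp)
        rw [Finset.sum_singleton] at h1
        have h0' := h0 i (by simp)
        have hci : c i = 0 := by linarith
        exact ⟨0, by simp [hci], by simp⟩
      · obtain ⟨i, j, hij, rfl⟩ := Finset.card_eq_two.mp h
        have hsum : ∑ k ∈ ({i, j} : Finset α), c k = c i + c j :=
          Finset.sum_pair hij
        have hi2 := h2 i (by simp); have hj2 := h2 j (by simp)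
        rw [hsum] at hi2 hj2
        have hij' : c i = c j := by linarith
        refine ⟨Function.update (fun _ => ((-(c i) : ℝ), (0 : ℝ))) i (c i, 0), ?_, ?_⟩
        · intro t ht
          by_cases hti : t = i
          · rw [hti, Function.update_self]
            simp
          · rw [Function.update_of_ne hti]
            have : t = j := by
              rcases Finset.mem_insert.mp ht with h' | h'
              · exact absurd h' hti
              · exact Finset.mem_singleton.mp h'
            rw [this, ← hij']
            simp
        · rw [Finset.sum_pair hij, Function.update_self,
            Function.update_of_ne (Ne.symm hij)]
          ext <;> simp
      · obtain ⟨i, j, k, hij, hik, hjk, rfl⟩ := Finset.card_eq_three.mp h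
        have hsum : ∑ l ∈ ({i, j, k} : Finset α), c l = c i + c j + c k := by
          rw [Finset.sum_insert (by simp [hij, hik]), Finset.sum_pair hjk]
          ring
        have hi2 := h2 i (by simp); have hj2 := h2 j (by simp)
        have hk2 := h2 k (by simp)
        rw [hsum] at hi2 hj2 hk2
        obtain ⟨p, q, r, hp, hq, hr, hpqr⟩ :=
          triangle_vectors (c i) (c j) (c k) (h0 i (by simp)) (h0 j (by simp))
            (h0 k (by simp)) (by linarith) (by linarith) (by linarith)
        refine ⟨Function.update (Function.update (fun _ => r) j q) i p, ?_, ?_⟩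
        · intro t ht
          by_cases hti : t = i
          · rw [hti, Function.update_self]
            exact hp
          · rw [Function.update_of_ne hti]
            by_cases htj : t = j
            · rw [htj, Function.update_self]
              exact hq
            · rw [Function.update_of_ne htj]
              have : t = k := by
                rcases Finset.mem_insert.mp ht with h' | h'
                · exact absurd h' hti
                rcases Finset.mem_insert.mp h' with h'' | h''
                · exact absurd h'' htj
                · exact Finset.mem_singleton.mp h''
              rw [this]
              exact hr
        · rw [Finset.sum_insert (by simp [hij, hik]), Finset.sum_pair hjk,
            Function.update_self, Function.update_of_ne (Ne.symm hij),
            Function.update_self, Function.update_of_ne (Ne.symm hik),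
            Function.update_of_ne (Ne.symm hjk), ← add_assoc]
          exact hpqr
    · -- card ≥ 4 : merge the two smallest elements
      push_neg at hcard
      have hne : s.Nonempty := Finset.card_pos.mp (by omega)
      obtain ⟨i, hi, hmin_i⟩ := s.exists_min_image c hne
      have hne' : (s.erase i).Nonempty := by
        rw [← Finset.card_pos, Finset.card_erase_of_mem hi]; omega
      obtain ⟨j, hj, hmin_j⟩ := (s.erase i).exists_min_image c hne'
      have hji : j ≠ i := Finset.ne_of_mem_erase hj
      have hjs : j ∈ s := Finset.mem_of_mem_erase hj
      have htc : 1 < ((s.erase i).erase j).card := by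
        rw [Finset.card_erase_of_mem hj, Finset.card_erase_of_mem hi]; omega
      obtain ⟨k, hk, l, hl, hkl⟩ := Finset.one_lt_card.mp htc
      have hks : k ∈ s := Finset.mem_of_mem_erase (Finset.mem_of_mem_erase hk)
      have hls : l ∈ s := Finset.mem_of_mem_erase (Finset.mem_of_mem_erase hl)
      have hbound : 2 * (c i + c j) ≤ ∑ t ∈ s, c t := by
        have h1 : c i ≤ c k := hmin_i k hks
        have h2' : c j ≤ c l := hmin_j l (Finset.mem_of_mem_erase hl)
        have hsub : ({k, l} : Finset α) ⊆ (s.erase i).erase j := by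
          intro t ht
          rcases Finset.mem_insert.mp ht with rfl | ht
          · exact hk
          · exact Finset.mem_singleton.mp ht ▸ hl
        have hsum4 : c k + c l ≤ ∑ t ∈ (s.erase i).erase j, c t := by
          rw [← Finset.sum_pair hkl]
          apply Finset.sum_le_sum_of_subset_of_nonneg hsub
          intro t ht _
          exact h0 t (Finset.mem_of_mem_erase (Finset.mem_of_mem_erase ht))
        have e1 : ∑ t ∈ s, c t = c i + ∑ t ∈ s.erase i, c t :=
          (Finset.add_sum_erase s c hi).symm
        have e2 : ∑ t ∈ s.erase i, c t = c j + ∑ t ∈ (s.erase i).erase j, c t :=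
          (Finset.add_sum_erase _ c hj).symm
        linarith
      have hins' : i ∉ s.erase i := Finset.notMem_erase i s
      have hsum' : ∑ t ∈ s.erase i, Function.update c j (c i + c j) t
          = ∑ t ∈ s, c t := by
        rw [Finset.sum_update_of_mem hj, Finset.sdiff_singleton_eq_erase,
          ← Finset.add_sum_erase s c hi, ← Finset.add_sum_erase _ c hj]
        ring
      have h0' : ∀ t ∈ s.erase i, 0 ≤ Function.update c j (c i + c j) t := by
        intro t ht
        rcases eq_or_ne t j with rfl | htj
        · rw [Function.update_self]
          exact add_nonneg (h0 i hi) (h0 t hjs)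
        · rw [Function.update_of_ne htj]
          exact h0 t (Finset.mem_of_mem_erase ht)
      have h2'' : ∀ t ∈ s.erase i, 2 * Function.update c j (c i + c j) t ≤
          ∑ r ∈ s.erase i, Function.update c j (c i + c j) r := by
        intro t ht
        rw [hsum']
        rcases eq_or_ne t j with rfl | htj
        · rw [Function.update_self]; exact hbound
        · rw [Function.update_of_ne htj]
          exact h2 t (Finset.mem_of_mem_erase ht)
      have hcard' : (s.erase i).card ≤ N := by
        rw [Finset.card_erase_of_mem hi]; omega
      obtain ⟨w', hw'1, hw'2⟩ := ih (s.erase i) hcard' _ h0' h2''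
      have hzj : (w' j).1 ^ 2 + (w' j).2 ^ 2 = (c i + c j) ^ 2 := by
        have := hw'1 j hj
        rwa [Function.update_self] at this
      have hwj0 : c i + c j = 0 → w' j = 0 := by
        intro hz
        apply pair_zero_of_sq
        rw [hzj, hz]; ring
      set wi := (c i / (c i + c j)) • w' j with hwi
      set wj := (c j / (c i + c j)) • w' j with hwj
      have hci0 : 0 ≤ c i := h0 i hi
      have hcj0 : 0 ≤ c j := h0 j hjs
      have hnormi : wi.1 ^ 2 + wi.2 ^ 2 = c i ^ 2 := by
        rcases eq_or_ne (c i + c j) 0 with hz | hz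
        · have hci : c i = 0 := by linarith
          rw [hwi, hwj0 hz]
          simp [hci]
        · rw [hwi]
          simp only [Prod.smul_fst, Prod.smul_snd, smul_eq_mul]
          have he : (c i / (c i + c j) * (w' j).1) ^ 2 +
              (c i / (c i + c j) * (w' j).2) ^ 2
              = (c i / (c i + c j)) ^ 2 * ((w' j).1 ^ 2 + (w' j).2 ^ 2) := by ring
          rw [he, hzj]
          field_simp
      have hnormj : wj.1 ^ 2 + wj.2 ^ 2 = c j ^ 2 := by
        rcases eq_or_ne (c i + c j) 0 with hz | hz
        · have hcj : c j = 0 := by linarith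
          rw [hwj, hwj0 hz]
          simp [hcj]
        · rw [hwj]
          simp only [Prod.smul_fst, Prod.smul_snd, smul_eq_mul]
          have he : (c j / (c i + c j) * (w' j).1) ^ 2 +
              (c j / (c i + c j) * (w' j).2) ^ 2
              = (c j / (c i + c j)) ^ 2 * ((w' j).1 ^ 2 + (w' j).2 ^ 2) := by ring
          rw [he, hzj]
          field_simp
      have hsplit : wi + wj = w' j := by
        rcases eq_or_ne (c i + c j) 0 with hz | hz
        · rw [hwi, hwj, hwj0 hz]
          simp
        · rw [hwi, hwj, ← add_smul, ← add_div, div_self hz, one_smul]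
      refine ⟨Function.update (Function.update w' j wj) i wi, ?_, ?_⟩
      · intro t ht
        by_cases hti : t = i
        · rw [hti, Function.update_self]
          exact hnormi
        · rw [Function.update_of_ne hti]
          by_cases htj : t = j
          · rw [htj, Function.update_self]
            exact hnormj
          · rw [Function.update_of_ne htj]
            have hts : t ∈ s.erase i := Finset.mem_erase.mpr ⟨hti, ht⟩
            have := hw'1 t hts
            rwa [Function.update_of_ne htj] at this
      · rw [← Finset.add_sum_erase s _ hi, Function.update_self]
        have e1 : ∑ t ∈ s.erase i, Function.update (Function.update w' j wj) i wi t
            = ∑ t ∈ s.erase i, Function.update w' j wj t :=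
          Finset.sum_congr rfl fun t ht => by
            rw [Function.update_of_ne (Finset.ne_of_mem_erase ht)]
        rw [e1, ← Finset.add_sum_erase _ _ hj, Function.update_self]
        have e2 : ∑ t ∈ (s.erase i).erase j, Function.update w' j wj t
            = ∑ t ∈ (s.erase i).erase j, w' t :=
          Finset.sum_congr rfl fun t ht => by
            rw [Function.update_of_ne (Finset.ne_of_mem_erase ht)]
        rw [e2, ← add_assoc, hsplit, Finset.add_sum_erase _ w' hj]
        exact hw'2


lemma norm_bound {E : Type*} [SeminormedAddCommGroup E] {m : ℕ}
    (z : Fin m → E) (h : ∑ i, z i = 0) (k : Fin m) :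
    2 * ‖z k‖ ≤ ∑ i, ‖z i‖ := by
  have h1 : z k = -∑ i ∈ Finset.univ.erase k, z i := by
    have h' := Finset.add_sum_erase Finset.univ z (Finset.mem_univ k)
    rw [h] at h'
    exact eq_neg_of_add_eq_zero_left h'
  have h2 : ‖z k‖ ≤ ∑ i ∈ Finset.univ.erase k, ‖z i‖ := by
    rw [h1, norm_neg]
    exact norm_sum_le _ _
  have h3 : ∑ i ∈ Finset.univ.erase k, ‖z i‖ = (∑ i, ‖z i‖) - ‖z k‖ := by
    rw [← Finset.add_sum_erase Finset.univ (fun i => ‖z i‖) (Finset.mem_univ k)]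
    ring
  linarith

/-- Membership in the cone Σ(n,2d): a sum of squares of degree-d forms. -/
def IsSOS (n d : ℕ) (p : MvPolynomial (Fin n) ℝ) : Prop :=
  ∃ (r : ℕ) (q : Fin r → MvPolynomial (Fin n) ℝ),
    (∀ i, (q i).IsHomogeneous d) ∧ p = ∑ i, q i ^ 2

lemma polygon_vectors' {α : Type*} [DecidableEq α] (s : Finset α) (c : α → ℝ)
      (h0 : ∀ i ∈ s, 0 ≤ c i) (h2 : ∀ k ∈ s, 2 * c k ≤ ∑ i ∈ s, c i) :
      ∃ w : α → ℝ × ℝ,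
        (∀ i ∈ s, (w i).1 ^ 2 + (w i).2 ^ 2 = c i ^ 2) ∧ ∑ i ∈ s, w i = 0 :=
  polygon_vectors s.card s le_rfl c h0 h2

theorem stmt_14
    (n d m : ℕ)
    (v : Fin m → Fin n → ℝ)
    (u : Fin m → ℝ) (hu : ∀ i, u i ≠ 0)
    (himage : {y : Fin m → ℝ | ∃ f : MvPolynomial (Fin n) ℝ,
        f.IsHomogeneous d ∧ ∀ i, eval (v i) f = y i} =
      {x : Fin m → ℝ | ∑ i, u i * x i = 0}) :
    {y : Fin m → ℝ | ∃ p : MvPolynomial (Fin n) ℝ,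
        IsSOS n d p ∧ ∀ i, eval (v i) p = y i} =
      {x : Fin m → ℝ | (∀ i, 0 ≤ x i) ∧
        ∀ k, 2 * |u k| * Real.sqrt (x k) ≤ ∑ i, |u i| * Real.sqrt (x i)} := by
  ext y
  simp only [Set.mem_setOf_eq]
  constructor
  · rintro ⟨p, ⟨r, q, hq, rfl⟩, hev⟩
    have hy : ∀ i, y i = ∑ j, (eval (v i) (q j)) ^ 2 := by
      intro i
      rw [← hev i]
      simp [map_sum]
    have hline : ∀ j, ∑ i, u i * eval (v i) (q j) = 0 := by
      intro j
      have hmem : (fun i => eval (v i) (q j)) ∈ {y : Fin m → ℝ |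
          ∃ f : MvPolynomial (Fin n) ℝ,
            f.IsHomogeneous d ∧ ∀ i, eval (v i) f = y i} :=
        ⟨q j, hq j, fun i => rfl⟩
      rw [himage] at hmem
      exact hmem
    refine ⟨fun i => ?_, fun k => ?_⟩
    · rw [hy i]
      exact Finset.sum_nonneg fun j _ => sq_nonneg _
    · set b : Fin m → EuclideanSpace ℝ (Fin r) :=
        fun i => (WithLp.equiv 2 (Fin r → ℝ)).symm (fun j => eval (v i) (q j)) with hb
      have hnorm : ∀ i, ‖b i‖ = Real.sqrt (y i) := by
        intro i
        rw [EuclideanSpace.norm_eq, hy i]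
        congr 1
        apply Finset.sum_congr rfl
        intro j _
        rw [hb]
        simp [WithLp.equiv_symm_apply, Real.norm_eq_abs, sq_abs]
      have hsum0 : ∑ i, u i • b i = 0 := by
        ext j
        have : (∑ i, u i • b i) j = ∑ i, u i * eval (v i) (q j) := by
          rw [WithLp.ofLp_sum, Finset.sum_apply]
          apply Finset.sum_congr rfl
          intro i _
          simp [hb, WithLp.equiv_symm_apply]
        rw [this, hline j]
        rfl
      have key := norm_bound (fun i => u i • b i) hsum0 k
      simp only [norm_smul, Real.norm_eq_abs, hnorm] at key
      calc 2 * |u k| * Real.sqrt (y k) = 2 * (|u k| * Real.sqrt (y k)) := by ring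
        _ ≤ ∑ i, |u i| * Real.sqrt (y i) := key
  · rintro ⟨hpos, hineq⟩
    obtain ⟨w, hw1, hw2⟩ := polygon_vectors' Finset.univ
      (fun i => |u i| * Real.sqrt (y i))
      (fun i _ => mul_nonneg (abs_nonneg _) (Real.sqrt_nonneg _))
      (fun k _ => by
        have := hineq k
        calc 2 * (|u k| * Real.sqrt (y k)) = 2 * |u k| * Real.sqrt (y k) := by ring
          _ ≤ ∑ i, |u i| * Real.sqrt (y i) := this)
    have hsq : ∀ i, (w i).1 ^ 2 + (w i).2 ^ 2 = u i ^ 2 * y i := by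
      intro i
      rw [hw1 i (Finset.mem_univ i), mul_pow, sq_abs, Real.sq_sqrt (hpos i)]
    have hline1 : ∑ i, u i * ((w i).1 / u i) = 0 := by
      have he : ∀ i, u i * ((w i).1 / u i) = (w i).1 := by
        intro i
        rw [mul_comm, div_mul_cancel₀ _ (hu i)]
      calc ∑ i, u i * ((w i).1 / u i) = ∑ i, (w i).1 :=
            Finset.sum_congr rfl fun i _ => he i
        _ = (∑ i, w i).1 := (Prod.fst_sum).symm
        _ = 0 := by rw [hw2]; rfl
    have hline2 : ∑ i, u i * ((w i).2 / u i) = 0 := by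
      have he : ∀ i, u i * ((w i).2 / u i) = (w i).2 := by
        intro i
        rw [mul_comm, div_mul_cancel₀ _ (hu i)]
      calc ∑ i, u i * ((w i).2 / u i) = ∑ i, (w i).2 :=
            Finset.sum_congr rfl fun i _ => he i
        _ = (∑ i, w i).2 := (Prod.snd_sum).symm
        _ = 0 := by rw [hw2]; rfl
    have hmem1 : (fun i => (w i).1 / u i) ∈
        {x : Fin m → ℝ | ∑ i, u i * x i = 0} := hline1
    have hmem2 : (fun i => (w i).2 / u i) ∈
        {x : Fin m → ℝ | ∑ i, u i * x i = 0} := hline2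
    rw [← himage] at hmem1 hmem2
    obtain ⟨f1, hf1h, hf1⟩ := hmem1
    obtain ⟨f2, hf2h, hf2⟩ := hmem2
    refine ⟨f1 ^ 2 + f2 ^ 2, ⟨2, ![f1, f2], ?_, by simp [Fin.sum_univ_two]⟩, ?_⟩
    · intro i
      fin_cases i <;> simpa
    · intro i
      rw [map_add, map_pow, map_pow, hf1 i, hf2 i]
      have := hsq i
      have hu2 : u i ^ 2 ≠ 0 := pow_ne_zero _ (hu i)
      field_simp
      rw [hsq i, mul_div_cancel_left₀ _ hu2]
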